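/- Let ς be a minimal length right coset representative of W_I in W and let u ∈ W with u ≤ wς for some w ∈ W_I. If additionally ς ≤ u, then there exists a unique v ∈ W_I with v ≤ w and u = vς. -/

import Mathlib

open CoxeterSystem

variable {B W : Type*} [Group W] {M : CoxeterMatrix B}

/-- The Bruhat order on a Coxeter group: `u ≤ w` iff `w` is obtained from `u` by
repeatedly multiplying on the right by reflections that increase length. -/
def bruhatLE (cs : CoxeterSystem M W) (u w : W) : Prop :=
  Relation.ReflTransGen
    (fun a b => cs.length a < cs.length b ∧ ∃ t, cs.IsReflection t ∧ b = a * t) u w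

/-- The standard parabolic subgroup generated by the simple reflections indexed by `I`. -/
def parabolic (cs : CoxeterSystem M W) (I : Set B) : Subgroup W :=
  Subgroup.closure (cs.simple '' I)

/-- `ς` is a minimal length representative of its right coset `W_I ς`. -/
def IsMinCosetRep (cs : CoxeterSystem M W) (I : Set B) (ς : W) : Prop :=
  ∀ u ∈ parabolic cs I, cs.length ς ≤ cs.length (u * ς)

open List

namespace BruhatAux

variable [DecidableEq W] (cs : CoxeterSystem M W)

local prefix:100 "s" => cs.simple
local prefix:100 "π" => cs.wordProd
local prefix:100 "ℓ" => cs.length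
local prefix:100 "ris" => cs.rightInvSeq

theorem ris_cons (i : B) (ω : List B) :
    cs.rightInvSeq (i :: ω) = ((π ω)⁻¹ * (s i) * (π ω)) :: cs.rightInvSeq ω := rfl

/-- The sign-flip permutation associated to a simple reflection. -/
def sigmaFun (i : B) : W × ℤˣ → W × ℤˣ :=
  fun p => (s i * p.1 * s i, if p.1 = s i then -p.2 else p.2)

theorem sigmaFun_invol (i : B) : Function.Involutive (sigmaFun cs i) := by
  rintro ⟨t, e⟩
  simp only [sigmaFun]
  have h1 : s i * (s i * t * s i) * s i = t := by
    conv_rhs => rw [← cs.simple_mul_simple_cancel_left (w := t) (i := i),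
      ← cs.simple_mul_simple_cancel_right (w := s i * (s i * t)) (i := i)]
    group
  have h2 : (s i * t * s i = s i) ↔ (t = s i) := by
    constructor
    · intro h
      have := congrArg (fun x => s i * x * s i) h
      simpa [h1] using this
    · rintro rfl
      simp [cs.simple_mul_simple_self]
  rcases eq_or_ne t (s i) with h | h
  · simp [h, h2.mpr h, h1]
  · simp [h, h2.not.mpr h, h1]

def sigma (i : B) : Equiv.Perm (W × ℤˣ) := (sigmaFun_invol cs i).toPerm

@[simp] theorem sigma_apply (i : B) (t : W) (e : ℤˣ) :
    sigma cs i (t, e) = (s i * t * s i, if t = s i then -e else e) := rfl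

/-- Product of sigmas along a word, with its action formula. -/
theorem sigma_prod_apply (ω : List B) (t : W) (e : ℤˣ) :
    (ω.map (sigma cs)).prod (t, e) =
      (π ω * t * (π ω)⁻¹, (-1 : ℤˣ) ^ ((ris ω).count t) * e) := by
  induction ω with
  | nil => simp
  | cons i ω ih =>
      rw [map_cons, prod_cons, Equiv.Perm.mul_apply, ih, ris_cons, count_cons, sigma_apply]
      have hfst : ∀ x : W, s i * (π ω * x * (π ω)⁻¹) * s i = π (i::ω) * x * (π (i::ω))⁻¹ := by
        intro x; rw [wordProd_cons, mul_inv_rev, cs.inv_simple]; group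
      rcases eq_or_ne t ((π ω)⁻¹ * s i * π ω) with h | h
      · subst h
        have hc : π ω * ((π ω)⁻¹ * s i * π ω) * (π ω)⁻¹ = s i := by group
        rw [if_pos hc, Prod.mk.injEq]
        refine ⟨hfst _, ?_⟩
        have : ((π ω)⁻¹ * s i * π ω == (π ω)⁻¹ * s i * π ω) = true := beq_self_eq_true _
        rw [this, if_pos rfl, pow_succ]
        rw [show ∀ a b : ℤˣ, -(a * b) = a * -1 * b from fun a b => by
          rw [mul_comm a (-1 : ℤˣ), neg_one_mul, neg_mul]]
      · have hc : π ω * t * (π ω)⁻¹ ≠ s i := by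
          intro hh
          apply h
          rw [← hh]; group
        rw [if_neg hc, Prod.mk.injEq]
        refine ⟨hfst _, ?_⟩
        have : ((π ω)⁻¹ * s i * π ω == t) = false := by
          simpa using Ne.symm h
        rw [this, if_neg (by simp), add_zero]



theorem flip_pow {G : Type*} [Group G] {p x : G} (hx : x * p = p⁻¹ * x) :
    ∀ d : ℕ, x * p ^ d = (p ^ d)⁻¹ * x := by
  intro d
  induction d with
  | zero => simp
  | succ d ih =>
      rw [pow_succ, ← mul_assoc, ih, mul_assoc, hx, ← mul_assoc, ← mul_inv_rev, ← pow_succ',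
        pow_succ]

theorem conj_pow {G : Type*} [Group G] {p x : G} (hx : x * p = p⁻¹ * x) (d : ℕ) :
    (p ^ d)⁻¹ * x * p ^ d = (p ^ (2 * d))⁻¹ * x := by
  rw [mul_assoc, flip_pow hx, ← mul_assoc, ← mul_inv_rev, ← pow_add, two_mul]

theorem dihedral_key {G : Type*} [Group G] (a b : G) (ha : a * a = 1) (hb : b * b = 1)
    (m : ℕ) (hp : (a * b) ^ m = 1) (n : ℕ) :
    ((if Even (n + m) then 1 else b) * (a * b) ^ ((n + m) / 2))⁻¹
        * (if Even (n + m) then b else a)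
        * ((if Even (n + m) then 1 else b) * (a * b) ^ ((n + m) / 2))
      = ((if Even n then 1 else b) * (a * b) ^ (n / 2))⁻¹
        * (if Even n then b else a)
        * ((if Even n then 1 else b) * (a * b) ^ (n / 2)) := by
  have hainv : a⁻¹ = a := inv_eq_of_mul_eq_one_right ha
  have hbinv : b⁻¹ = b := inv_eq_of_mul_eq_one_right hb
  have hac : ∀ x, a * (a * x) = x := fun x => by rw [← mul_assoc, ha, one_mul]
  have hbc : ∀ x, b * (b * x) = x := fun x => by rw [← mul_assoc, hb, one_mul]
  have hfb : b * (a * b) = (a * b)⁻¹ * b := by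
    simp [mul_inv_rev, hainv, hbinv, mul_assoc, hac, hbc, ha, hb]
  have hfbab : (b * (a * b)) * (a * b) = (a * b)⁻¹ * (b * (a * b)) := by
    simp [mul_inv_rev, hainv, hbinv, mul_assoc, hac, hbc, ha, hb]
  have econj : ∀ d : ℕ, (b * (a * b) ^ d)⁻¹ * a * (b * (a * b) ^ d)
      = ((a * b) ^ (2 * d))⁻¹ * (b * (a * b)) := by
    intro d
    rw [← conj_pow hfbab d]
    simp [mul_inv_rev, hbinv, mul_assoc]
  rcases Nat.even_or_odd m with ⟨h, rfl⟩ | ⟨h, rfl⟩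
  · rcases Nat.even_or_odd n with ⟨r, rfl⟩ | ⟨r, rfl⟩
    · have hcm : Even (r + r + (h + h)) := ⟨r + h, by ring⟩
      have hcn : Even (r + r) := ⟨r, rfl⟩
      rw [if_pos hcm, if_pos hcm, if_pos hcn, if_pos hcn,
        show (r + r + (h + h)) / 2 = r + h by omega, show (r + r) / 2 = r by omega,
        one_mul, one_mul, conj_pow hfb, conj_pow hfb,
        show 2 * (r + h) = 2 * h + 2 * r by ring, pow_add, mul_inv_rev, mul_assoc]
      congr 1
      rw [show (h + h) = 2 * h by ring] at hp
      rw [hp, inv_one, one_mul]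
    · have hcm : ¬ Even (2 * r + 1 + (h + h)) := by simp [parity_simps]
      have hcn : ¬ Even (2 * r + 1) := by simp [parity_simps]
      rw [if_neg hcm, if_neg hcm, if_neg hcn, if_neg hcn,
        show (2 * r + 1 + (h + h)) / 2 = r + h by omega, show (2 * r + 1) / 2 = r by omega,
        econj, econj, show 2 * (r + h) = 2 * h + 2 * r by ring, pow_add, mul_inv_rev, mul_assoc]
      congr 1
      rw [show (h + h) = 2 * h by ring] at hp
      rw [hp, inv_one, one_mul]
  · have hpp : ((a * b) ^ (2 * h))⁻¹ = a * b := by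
      rw [inv_eq_iff_mul_eq_one, ← pow_succ]
      exact hp
    rcases Nat.even_or_odd n with ⟨r, rfl⟩ | ⟨r, rfl⟩
    · have hcm : ¬ Even (r + r + (2 * h + 1)) := by simp [parity_simps]
      have hcn : Even (r + r) := ⟨r, rfl⟩
      rw [if_neg hcm, if_neg hcm, if_pos hcn, if_pos hcn,
        show (r + r + (2 * h + 1)) / 2 = r + h by omega, show (r + r) / 2 = r by omega,
        one_mul, econj, conj_pow hfb,
        show 2 * (r + h) = 2 * h + 2 * r by ring, pow_add, mul_inv_rev, mul_assoc]
      congr 1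
      rw [hpp]
      simp [mul_assoc, hac, hbc]
    · have hcm : Even (2 * r + 1 + (2 * h + 1)) := ⟨r + h + 1, by ring⟩
      have hcn : ¬ Even (2 * r + 1) := by simp [parity_simps]
      rw [if_pos hcm, if_pos hcm, if_neg hcn, if_neg hcn,
        show (2 * r + 1 + (2 * h + 1)) / 2 = r + h + 1 by omega,
        show (2 * r + 1) / 2 = r by omega, one_mul, econj, conj_pow hfb,
        show 2 * (r + h + 1) = (2 * h + 2) + 2 * r by ring, pow_add, mul_inv_rev, mul_assoc]
      congr 1
      have hq : (a * b) ^ (2 * h + 2) = a * b := by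
        rw [pow_succ, hp, one_mul]
      rw [hq, mul_inv_rev, hainv, hbinv, mul_assoc]


end BruhatAux

namespace BruhatAux
variable {B W : Type*} [Group W] {M : CoxeterMatrix B}
variable [DecidableEq W] (cs : CoxeterSystem M W)
local prefix:100 "s" => cs.simple
local prefix:100 "π" => cs.wordProd
local prefix:100 "ℓ" => cs.length
local prefix:100 "ris" => cs.rightInvSeq

theorem altword_succ_succ (i j : B) (m : ℕ) :
    alternatingWord i j (2 * m + 2) = i :: j :: alternatingWord i j (2 * m) := by
  rw [show 2*m+2 = (2*m+1)+1 from rfl, alternatingWord_succ',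
    if_neg (by simp [Nat.even_add_one, parity_simps]), alternatingWord_succ', if_pos (by simp)]

theorem prod_map_altword {G : Type*} [Monoid G] (f : B → G) (i j : B) (m : ℕ) :
    ((alternatingWord i j (2 * m)).map f).prod = (f i * f j) ^ m := by
  induction m with
  | zero => simp [alternatingWord]
  | succ m ih =>
      rw [show 2*(m+1) = 2*m+2 by ring, altword_succ_succ, map_cons, map_cons, prod_cons,
        prod_cons, ih, pow_succ']
      rw [mul_assoc]

theorem altword_drop (i j : B) (k : ℕ) :
    ∀ n, (alternatingWord i j n).drop k = alternatingWord i j (n - k) := by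
  induction k with
  | zero => simp
  | succ k ih =>
      intro n
      cases n with
      | zero => simp [alternatingWord]
      | succ n =>
          rw [alternatingWord_succ', drop_succ_cons, ih n]
          congr 1
          omega

/-- The reflections appearing in inversion sequences of alternating words. -/
def altRef (i j : B) (n : ℕ) : W :=
  (π (alternatingWord i j n))⁻¹ * s (if Even n then j else i) * π (alternatingWord i j n)

theorem altRef_add_M (i j : B) (n : ℕ) : altRef cs i j (n + M i j) = altRef cs i j n := by
  unfold altRef
  rw [cs.prod_alternatingWord_eq_mul_pow, cs.prod_alternatingWord_eq_mul_pow,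
    apply_ite cs.simple, apply_ite cs.simple]
  exact dihedral_key (s i) (s j) (cs.simple_mul_simple_self i) (cs.simple_mul_simple_self j)
    (M i j) (cs.simple_mul_simple_pow i j) n

theorem getD_ris_altword (i j : B) (N k : ℕ) (hk : k < N) :
    (cs.rightInvSeq (alternatingWord i j N)).getD k 1 = altRef cs i j (N - k - 1) := by
  have h1 : (cs.rightInvSeq (alternatingWord i j N)).drop k
      = cs.rightInvSeq (alternatingWord i j (N - k)) := by
    rw [← cs.rightInvSeq_drop, altword_drop]
  have h2 : (cs.rightInvSeq (alternatingWord i j N)).getD k 1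
      = ((cs.rightInvSeq (alternatingWord i j N)).drop k).getD 0 1 := by
    rw [List.getD_eq_getElem?_getD, List.getD_eq_getElem?_getD, List.getElem?_drop, add_zero]
  rw [h2, h1]
  obtain ⟨n, hn⟩ : ∃ n, N - k = n + 1 := ⟨N - k - 1, by omega⟩
  rw [hn, alternatingWord_succ', ris_cons]
  simp only [List.getD_cons_zero]
  simp only [Nat.add_sub_cancel]
  rfl


theorem count_ris_braid_even (i j : B) (t : W) :
    Even ((cs.rightInvSeq (alternatingWord i j (2 * M i j))).count t) := by
  set m := M i j with hm
  set L := cs.rightInvSeq (alternatingWord i j (2 * m)) with hL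
  have hlen : L.length = 2 * m := by
    rw [hL, cs.length_rightInvSeq, length_alternatingWord]
  have htd : L.take m = L.drop m := by
    apply List.ext_getElem
    · rw [List.length_take, List.length_drop, hlen]; omega
    · intro k h1 h2
      rw [List.length_take, hlen] at h1
      have hk : k < m := by omega
      rw [List.getElem_take, List.getElem_drop]
      have e1 : L[k] = L.getD k 1 := (List.getD_eq_getElem L 1 (by omega)).symm
      have e2 : L[m + k] = L.getD (m + k) 1 := (List.getD_eq_getElem L 1 (by omega)).symm
      rw [e1, e2, hL, getD_ris_altword cs i j _ _ (by omega), getD_ris_altword cs i j _ _ (by omega)]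
      rw [show 2 * m - (m + k) - 1 = m - k - 1 by omega, show 2 * m - k - 1 = (m - k - 1) + m by omega]
      exact altRef_add_M cs i j (m - k - 1)
  have hsplit := List.take_append_drop m L
  have h2c : List.count t L = 2 * List.count t (L.take m) := by
    calc List.count t L = List.count t (L.take m ++ L.drop m) := by rw [hsplit]
      _ = List.count t (L.take m) + List.count t (L.drop m) := List.count_append
      _ = List.count t (L.take m) + List.count t (L.take m) := by rw [htd]
      _ = 2 * List.count t (L.take m) := by ring
  exact ⟨List.count t (L.take m), by omega⟩

theorem sigma_liftable : M.IsLiftable (sigma cs) := by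
  intro i j
  have h1 : (sigma cs i * sigma cs j) ^ M i j
      = ((alternatingWord i j (2 * M i j)).map (sigma cs)).prod :=
    (prod_map_altword (sigma cs) i j (M i j)).symm
  have h2 : π (alternatingWord i j (2 * M i j)) = 1 := by
    have : π (alternatingWord i j (2 * M i j))
        = ((alternatingWord i j (2 * M i j)).map cs.simple).prod := rfl
    rw [this, prod_map_altword cs.simple i j (M i j), cs.simple_mul_simple_pow i j]
  refine Equiv.ext fun x => ?_
  obtain ⟨t, e⟩ := x
  rw [h1, sigma_prod_apply, h2, Equiv.Perm.one_apply]
  have hev := count_ris_braid_even cs i j t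
  rw [Even.neg_one_pow hev]
  simp

noncomputable def mu : W →* Equiv.Perm (W × ℤˣ) := cs.lift ⟨sigma cs, sigma_liftable cs⟩

theorem mu_simple (i : B) : mu cs (s i) = sigma cs i := cs.lift_apply_simple (sigma_liftable cs) i

theorem mu_wordProd (ω : List B) : mu cs (π ω) = (ω.map (sigma cs)).prod := by
  induction ω with
  | nil => simp [wordProd_nil]
  | cons i ω ih => rw [wordProd_cons, map_mul, mu_simple, ih, map_cons, prod_cons]

theorem mu_apply_word (ω : List B) (t : W) (e : ℤˣ) :
    mu cs (π ω) (t, e) = (π ω * t * (π ω)⁻¹, (-1 : ℤˣ) ^ ((ris ω).count t) * e) := by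
  rw [mu_wordProd, sigma_prod_apply]

theorem mu_fst (w t : W) (e : ℤˣ) : (mu cs w (t, e)).1 = w * t * w⁻¹ := by
  obtain ⟨ω, rfl⟩ := cs.wordProd_surjective w
  rw [mu_apply_word]

theorem mu_neg (w t : W) (e : ℤˣ) :
    mu cs w (t, -e) = ((mu cs w (t, e)).1, -(mu cs w (t, e)).2) := by
  obtain ⟨ω, rfl⟩ := cs.wordProd_surjective w
  rw [mu_apply_word, mu_apply_word, mul_neg]

theorem mu_refl {t : W} (ht : cs.IsReflection t) (e : ℤˣ) : mu cs t (t, e) = (t, -e) := by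
  obtain ⟨q, i, rfl⟩ := ht
  have hfst : (mu cs q⁻¹ (q * s i * q⁻¹, e)).1 = s i := by
    rw [mu_fst]; group
  set e₁ := (mu cs q⁻¹ (q * s i * q⁻¹, e)).2 with he₁
  have hx : mu cs q⁻¹ (q * s i * q⁻¹, e) = (s i, e₁) := Prod.ext hfst rfl
  have step1 : mu cs (q * s i * q⁻¹) (q * s i * q⁻¹, e)
      = mu cs q (mu cs (s i) (mu cs q⁻¹ (q * s i * q⁻¹, e))) := by
    rw [show q * s i * q⁻¹ = q * (s i * q⁻¹) by rw [mul_assoc], map_mul, map_mul]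
    rfl
  rw [step1, hx, mu_simple, sigma_apply, if_pos rfl, cs.simple_mul_simple_self, one_mul, mu_neg]
  have hq : mu cs q (s i, e₁) = (q * s i * q⁻¹, e) := by
    rw [← hx, ← Equiv.Perm.mul_apply, ← map_mul, mul_inv_cancel, map_one, Equiv.Perm.one_apply]
  rw [hq]

theorem snd_mu_reduced {ω : List B} (hω : cs.IsReduced ω) (t : W) :
    (mu cs (π ω) (t, 1)).2 = if t ∈ ris ω then -1 else 1 := by
  rw [mu_apply_word]
  by_cases h : t ∈ ris ω
  · rw [if_pos h]
    rw [List.count_eq_one_of_mem (hω.nodup_rightInvSeq) h]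
    simp
  · rw [if_neg h, List.count_eq_zero_of_not_mem h]
    simp

theorem strong_exchange_mem {w t : W} (ht : cs.IsReflection t) (hlt : ℓ (w * t) < ℓ w)
    {ω : List B} (hω : cs.IsReduced ω) (hw : w = π ω) : t ∈ ris ω := by
  by_contra hmem
  obtain ⟨ω', hω', hw'⟩ := cs.exists_reduced_word' (w * t)
  have h1 : (mu cs w (t, 1)).2 = 1 := by
    rw [hw, snd_mu_reduced cs hω, if_neg hmem]
  have h2 : mu cs w (t, 1) = mu cs (w * t) (t, -1) := by
    have hwt : (w * t) * t = w := by rw [mul_assoc, ht.mul_self, mul_one]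
    calc mu cs w (t, 1) = mu cs ((w * t) * t) (t, 1) := by rw [hwt]
      _ = mu cs (w * t) (mu cs t (t, 1)) := by rw [map_mul]; rfl
      _ = mu cs (w * t) (t, -1) := by rw [mu_refl cs ht]
  have h3 : mu cs (w * t) (t, -1) = ((mu cs (w * t) (t, 1)).1, -(mu cs (w * t) (t, 1)).2) :=
    mu_neg cs (w * t) t 1
  by_cases hm' : t ∈ cs.rightInvSeq ω'
  · have := (cs.isRightInversion_of_mem_rightInvSeq hω' hm').2
    rw [← hw'] at this
    rw [mul_assoc, ht.mul_self, mul_one] at this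
    omega
  · have h4 : (mu cs (w * t) (t, 1)).2 = 1 := by
      rw [hw', snd_mu_reduced cs hω', if_neg hm']
    rw [h2, h3] at h1
    rw [h4] at h1
    simp at h1

theorem strong_exchange {w t : W} (ht : cs.IsReflection t) (hlt : ℓ (w * t) < ℓ w)
    {ω : List B} (hω : cs.IsReduced ω) (hw : w = π ω) :
    ∃ j < ω.length, w * t = π (ω.eraseIdx j) := by
  have hmem := strong_exchange_mem cs ht hlt hω hw
  obtain ⟨j, hj, hget⟩ := List.mem_iff_getElem.mp hmem
  rw [cs.length_rightInvSeq] at hj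
  refine ⟨j, hj, ?_⟩
  rw [hw, ← cs.wordProd_mul_getD_rightInvSeq ω j]
  congr 1
  rw [List.getD_eq_getElem _ _ (by rw [cs.length_rightInvSeq]; exact hj), hget]


theorem strong_exchange_left {w t : W} (ht : cs.IsReflection t) (hlt : ℓ (t * w) < ℓ w)
    {ω : List B} (hω : cs.IsReduced ω) (hw : w = π ω) :
    ∃ ω', ω' <+ ω ∧ ω'.length + 1 = ω.length ∧ t * w = π ω' := by
  have h1 : ℓ (w⁻¹ * t) < ℓ w⁻¹ := by
    have : w⁻¹ * t = (t * w)⁻¹ := by rw [mul_inv_rev, ht.inv]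
    rw [this, cs.length_inv, cs.length_inv]
    exact hlt
  have h2 : cs.IsReduced ω.reverse := (cs.isReduced_reverse_iff ω).mpr hω
  have h3 : w⁻¹ = π ω.reverse := by rw [cs.wordProd_reverse, hw]
  obtain ⟨j, hj, hje⟩ := strong_exchange cs ht h1 h2 h3
  refine ⟨(ω.reverse.eraseIdx j).reverse, ?_, ?_, ?_⟩
  · have := (List.eraseIdx_sublist ω.reverse j).reverse
    rwa [List.reverse_reverse] at this
  · have hj' : j < ω.length := by simpa using hj
    rw [List.length_reverse, List.length_eraseIdx, List.length_reverse, if_pos hj']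
    omega
  · have : t * w = (w⁻¹ * t)⁻¹ := by rw [mul_inv_rev, ht.inv, inv_inv]
    rw [this, hje, ← cs.wordProd_reverse]

theorem strong_exchange_right {w t : W} (ht : cs.IsReflection t) (hlt : ℓ (w * t) < ℓ w)
    {ω : List B} (hω : cs.IsReduced ω) (hw : w = π ω) :
    ∃ ω', ω' <+ ω ∧ ω'.length + 1 = ω.length ∧ w * t = π ω' := by
  obtain ⟨j, hj, hje⟩ := strong_exchange cs ht hlt hω hw
  refine ⟨ω.eraseIdx j, List.eraseIdx_sublist ω j, ?_, hje⟩
  rw [List.length_eraseIdx, if_pos hj]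
  omega

theorem deletion_aux : ∀ (n : ℕ) (ω : List B), ω.length ≤ n →
    ∃ ω', ω' <+ ω ∧ cs.IsReduced ω' ∧ π ω' = π ω := by
  intro n
  induction n with
  | zero =>
      intro ω h
      have : ω = [] := List.length_eq_zero_iff.mp (by omega)
      subst this
      exact ⟨[], List.Sublist.refl _, by simp [CoxeterSystem.IsReduced], rfl⟩
  | succ n IH =>
      intro ω hlen
      by_cases hred : cs.IsReduced ω
      · exact ⟨ω, List.Sublist.refl _, hred, rfl⟩
      have hex : ∃ j, cs.IsReduced (ω.take j) ∧ ¬ cs.IsReduced (ω.take (j+1)) := by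
        by_contra hc
        push_neg at hc
        have hall : ∀ j, cs.IsReduced (ω.take j) := by
          intro j
          induction j with
          | zero => simp [CoxeterSystem.IsReduced]
          | succ j ihj => exact hc j ihj
        have := hall ω.length
        rw [List.take_length] at this
        exact hred this
      obtain ⟨j, hjr, hjn⟩ := hex
      have hj : j < ω.length := by
        by_contra hc
        push_neg at hc
        rw [List.take_of_length_le (by omega)] at hjn
        rw [List.take_of_length_le hc] at hjr
        exact hjn hjr
      have htake : ω.take (j+1) = ω.take j ++ [ω[j]] := by
        rw [List.take_succ, List.getElem?_eq_getElem hj]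
        rfl
      have hlenj : (ω.take j).length = j := List.length_take_of_le (by omega)
      have hprod : π (ω.take (j+1)) = π (ω.take j) * s (ω[j]) := by
        rw [htake, wordProd_append, wordProd_singleton]
      have hlt : ℓ (π (ω.take j) * s (ω[j])) < ℓ (π (ω.take j)) := by
        rcases cs.length_mul_simple (π (ω.take j)) ω[j] with h | h
        · exfalso
          apply hjn
          unfold CoxeterSystem.IsReduced at hjr ⊢
          rw [hprod, h, hjr, htake, List.length_append, hlenj]
          simp
        · unfold CoxeterSystem.IsReduced at hjr
          rw [hjr, hlenj] at h
          have hne : ℓ (π (ω.take (j+1))) ≠ j + 1 := by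
            intro hc
            apply hjn
            unfold CoxeterSystem.IsReduced
            rw [hc, htake, List.length_append, hlenj]
            simp
          rw [hprod] at hne
          omega
      obtain ⟨l, hlsub, hllen, hlprod⟩ :=
        strong_exchange_right cs (cs.isReflection_simple ω[j]) hlt hjr rfl
      set ω'' := l ++ ω.drop (j+1) with hω''
      have hsub'' : ω'' <+ ω := by
        calc ω'' <+ ω.take (j+1) ++ ω.drop (j+1) := by
              apply List.Sublist.append _ (List.Sublist.refl _)
              calc l <+ ω.take j := hlsub
                _ <+ ω.take (j+1) := by rw [htake]; exact List.sublist_append_left _ _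
          _ = ω := List.take_append_drop _ _
      have hprod'' : π ω'' = π ω := by
        conv_rhs => rw [← List.take_append_drop (j+1) ω]
        rw [hω'', wordProd_append, wordProd_append, hprod, hlprod]
      have hlen'' : ω''.length ≤ n := by
        rw [hω'', List.length_append, List.length_drop]
        rw [hlenj] at hllen
        omega
      obtain ⟨ω', h1, h2, h3⟩ := IH ω'' hlen''
      exact ⟨ω', h1.trans hsub'', h2, by rw [h3, hprod'']⟩

theorem deletion (ω : List B) : ∃ ω', ω' <+ ω ∧ cs.IsReduced ω' ∧ π ω' = π ω :=
  deletion_aux cs ω.length ω le_rfl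


section Bruhat
theorem bLE_trans {u v w : W} (h1 : bruhatLE cs u v) (h2 : bruhatLE cs v w) :
    bruhatLE cs u w := Relation.ReflTransGen.trans h1 h2

theorem bLE_length_le {u w : W} (h : bruhatLE cs u w) : ℓ u ≤ ℓ w := by
  induction h with
  | refl => exact le_refl _
  | tail h1 h2 ih => exact le_trans ih (le_of_lt h2.1)
  
theorem bLE_eq_of_length_ge {u w : W} (h : bruhatLE cs u w) (hl : ℓ w ≤ ℓ u) : u = w := by
  rcases Relation.ReflTransGen.cases_tail h with h' | ⟨c, hc, hedge⟩
  · exact h'.symm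
  · have := bLE_length_le cs hc
    obtain ⟨hlen, -⟩ := hedge
    omega

theorem bLE_of_edge {u t : W} (ht : cs.IsReflection t) (h : ℓ u < ℓ (u * t)) :
    bruhatLE cs u (u * t) :=
  Relation.ReflTransGen.single ⟨h, t, ht, rfl⟩

theorem bLE_of_edge_left {u t : W} (ht : cs.IsReflection t) (h : ℓ u < ℓ (t * u)) :
    bruhatLE cs u (t * u) := by
  have hconj : cs.IsReflection (u⁻¹ * t * u) := by
    have := (cs.isReflection_conj_iff u⁻¹ t).mpr ht
    rwa [inv_inv] at this
  have heq : t * u = u * (u⁻¹ * t * u) := by group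
  have h' : ℓ u < ℓ (u * (u⁻¹ * t * u)) := by rwa [← heq]
  have := bLE_of_edge cs hconj h'
  rwa [← heq] at this

theorem bLE_inv {u w : W} (h : bruhatLE cs u w) : bruhatLE cs u⁻¹ w⁻¹ := by
  induction h with
  | refl => exact Relation.ReflTransGen.refl
  | tail h1 hedge ih =>
      rename_i b c
      obtain ⟨hlen, t, ht, rfl⟩ := hedge
      refine bLE_trans cs ih ?_
      have heq : (b * t)⁻¹ = t * b⁻¹ := by rw [mul_inv_rev, ht.inv]
      rw [heq]
      apply bLE_of_edge_left cs ht
      rw [show t * b⁻¹ = (b * t)⁻¹ by rw [mul_inv_rev, ht.inv], cs.length_inv, cs.length_inv]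
      exact hlen

theorem bLE_eraseIdx {ω : List B} (hω : cs.IsReduced ω) (j : ℕ) :
    bruhatLE cs (π (ω.eraseIdx j)) (π ω) := by
  by_cases hj : j < ω.length
  · set t := (cs.rightInvSeq ω).getD j 1 with htdef
    have hmem : t ∈ cs.rightInvSeq ω := by
      rw [htdef, List.getD_eq_getElem _ _ (by rw [cs.length_rightInvSeq]; exact hj)]
      exact List.getElem_mem _
    have ht : cs.IsReflection t := cs.isReflection_of_mem_rightInvSeq ω hmem
    have hmul : π ω * t = π (ω.eraseIdx j) := cs.wordProd_mul_getD_rightInvSeq ω j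
    have hback : π (ω.eraseIdx j) * t = π ω := by
      rw [← hmul, mul_assoc, ht.mul_self, mul_one]
    have hlen : ℓ (π (ω.eraseIdx j)) < ℓ (π ω) := by
      calc ℓ (π (ω.eraseIdx j)) ≤ (ω.eraseIdx j).length := cs.length_wordProd_le _
        _ < ω.length := by rw [List.length_eraseIdx, if_pos hj]; omega
        _ = ℓ (π ω) := hω.symm
    have := bLE_of_edge cs ht (by rw [hback]; exact hlen)
    rwa [hback] at this
  · rw [List.eraseIdx_of_length_le (by omega)]
    exact Relation.ReflTransGen.refl

end Bruhat

theorem bLE_desc {x : W} {k : B} (h : ℓ (x * s k) < ℓ x) : bruhatLE cs (x * s k) x := by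
  have h2 := bLE_of_edge cs (cs.isReflection_simple k) (u := x * s k) (t := s k)
    (by rw [cs.simple_mul_simple_cancel_right]; exact h)
  rwa [cs.simple_mul_simple_cancel_right] at h2

theorem lifting : ∀ (n : ℕ) (y : W), ℓ y = n → ∀ (k : B) (x : W), bruhatLE cs x y →
    ((ℓ (y * s k) < ℓ y →
       (ℓ (x * s k) < ℓ x → bruhatLE cs (x * s k) (y * s k)) ∧
       (ℓ x < ℓ (x * s k) → bruhatLE cs x (y * s k) ∧ bruhatLE cs (x * s k) y)) ∧
     (ℓ y < ℓ (y * s k) → ℓ x < ℓ (x * s k) → bruhatLE cs (x * s k) (y * s k))) := by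
  intro n
  induction n using Nat.strong_induction_on with
  | _ n IH =>
    intro y hy k x hxy
    constructor
    · -- part (a)
      intro hys
      obtain ⟨ω₀, hω₀, hprod₀⟩ := cs.exists_reduced_word' (y * s k)
      have hcancel : (y * s k) * s k = y := cs.simple_mul_simple_cancel_right (w := y) k
      have hyw : y = π (ω₀ ++ [k]) := by
        rw [wordProd_append, wordProd_singleton, ← hprod₀, hcancel]
      have hlω₀ : ω₀.length = ℓ (y * s k) := by rw [← hω₀, hprod₀]
      have hred : cs.IsReduced (ω₀ ++ [k]) := by
        unfold CoxeterSystem.IsReduced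
        have h1 : ℓ (π (ω₀ ++ [k])) ≤ ω₀.length + 1 := by
          simpa using cs.length_wordProd_le (ω₀ ++ [k])
        rw [← hyw] at h1
        rw [← hyw, List.length_append, List.length_singleton]
        omega
      rcases Relation.ReflTransGen.cases_tail hxy with heq | ⟨z, hxz, hedge⟩
      · subst heq
        exact ⟨fun _ => Relation.ReflTransGen.refl, fun hxs => absurd hxs (by omega)⟩
      · obtain ⟨hlenz, t, ht, hyzt⟩ := hedge
        have hz : z = y * t := by rw [hyzt, mul_assoc, ht.mul_self, mul_one]
        have hlt : ℓ (y * t) < ℓ y := by rw [← hz]; exact hlenz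
        obtain ⟨j, hj, hjE⟩ := strong_exchange cs ht hlt hred hyw
        rw [List.length_append, List.length_singleton] at hj
        by_cases hjlast : j = ω₀.length
        · have herase : (ω₀ ++ [k]).eraseIdx j = ω₀ := by
            subst hjlast
            rw [List.eraseIdx_eq_take_drop_succ]
            simp
          have hzys : z = y * s k := by rw [hz, hjE, herase, ← hprod₀]
          rw [hzys] at hxz
          constructor
          · intro hxs
            exact bLE_trans cs (bLE_desc cs hxs) hxz
          · intro hxs
            refine ⟨hxz, ?_⟩
            have h2 := (IH (ℓ (y * s k)) (by omega) (y * s k) rfl k x hxz).2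
              (by rw [hcancel]; exact hys) hxs
            rwa [hcancel] at h2
        · have hjlt : j < ω₀.length := by omega
          have herase : (ω₀ ++ [k]).eraseIdx j = ω₀.eraseIdx j ++ [k] :=
            List.eraseIdx_append_of_lt_length hjlt _
          have hzz : z = π (ω₀.eraseIdx j) * s k := by
            rw [hz, hjE, herase, wordProd_append, wordProd_singleton]
          have hzs : z * s k = π (ω₀.eraseIdx j) := by
            rw [hzz, cs.simple_mul_simple_cancel_right]
          have hz'ys : bruhatLE cs (π (ω₀.eraseIdx j)) (y * s k) := by
            rw [hprod₀]; exact bLE_eraseIdx cs hω₀ j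
          have hzy : bruhatLE cs z y := Relation.ReflTransGen.single ⟨hlenz, t, ht, hyzt⟩
          have hysy : bruhatLE cs (y * s k) y := bLE_desc cs hys
          by_cases hzc : ℓ (z * s k) < ℓ z
          · have hIH := (IH (ℓ z) (by omega) z rfl k x hxz).1 hzc
            constructor
            · intro hxs
              have h1 := hIH.1 hxs
              rw [hzs] at h1
              exact bLE_trans cs h1 hz'ys
            · intro hxs
              obtain ⟨h1, h2⟩ := hIH.2 hxs
              rw [hzs] at h1
              exact ⟨bLE_trans cs h1 hz'ys, bLE_trans cs h2 hzy⟩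
          · have hzc' : ℓ z < ℓ (z * s k) := by
              have := cs.length_mul_simple_ne z k; omega
            have hzz' : bruhatLE cs z (π (ω₀.eraseIdx j)) := by
              rw [← hzs]; exact bLE_of_edge cs (cs.isReflection_simple k) hzc'
            constructor
            · intro hxs
              exact bLE_trans cs (bLE_desc cs hxs)
                (bLE_trans cs hxz (bLE_trans cs hzz' hz'ys))
            · intro hxs
              have h1 := (IH (ℓ z) (by omega) z rfl k x hxz).2 hzc' hxs
              rw [hzs] at h1
              exact ⟨bLE_trans cs hxz (bLE_trans cs hzz' hz'ys),
                bLE_trans cs h1 (bLE_trans cs hz'ys hysy)⟩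
    · -- part (b)
      intro hys hxs
      rcases Relation.ReflTransGen.cases_tail hxy with heq | ⟨z, hxz, hedge⟩
      · subst heq; exact Relation.ReflTransGen.refl
      · obtain ⟨hlenz, t, ht, hyzt⟩ := hedge
        by_cases hzc : ℓ z < ℓ (z * s k)
        · have h1 := (IH (ℓ z) (by omega) z rfl k x hxz).2 hzc hxs
          have hconj : cs.IsReflection (s k * t * s k) := by
            have := ht.conj (s k)
            rwa [cs.inv_simple] at this
          have heq2 : y * s k = (z * s k) * (s k * t * s k) := by
            rw [hyzt]
            simp [mul_assoc, cs.simple_mul_simple_cancel_left]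
          have hlen2 : ℓ (z * s k) < ℓ (y * s k) := by
            have ha := cs.length_mul_le z (s k)
            rw [cs.length_simple] at ha
            omega
          have hedge2 := bLE_of_edge cs hconj (by rw [← heq2]; exact hlen2)
          rw [← heq2] at hedge2
          exact bLE_trans cs h1 hedge2
        · have hzc' : ℓ (z * s k) < ℓ z := by
            have := cs.length_mul_simple_ne z k; omega
          obtain ⟨h1, h2⟩ := ((IH (ℓ z) (by omega) z rfl k x hxz).1 hzc').2 hxs
          have hzy : bruhatLE cs z y := Relation.ReflTransGen.single ⟨hlenz, t, ht, hyzt⟩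
          have hyys : bruhatLE cs y (y * s k) := bLE_of_edge cs (cs.isReflection_simple k) hys
          exact bLE_trans cs h2 (bLE_trans cs hzy hyys)


theorem lifting_left (k : B) (y x : W) (hxy : bruhatLE cs x y) :
    ((ℓ (s k * y) < ℓ y →
       (ℓ (s k * x) < ℓ x → bruhatLE cs (s k * x) (s k * y)) ∧
       (ℓ x < ℓ (s k * x) → bruhatLE cs x (s k * y) ∧ bruhatLE cs (s k * x) y)) ∧
     (ℓ y < ℓ (s k * y) → ℓ x < ℓ (s k * x) → bruhatLE cs (s k * x) (s k * y))) := by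
  have hxyi := bLE_inv cs hxy
  have key := lifting cs (ℓ y⁻¹) y⁻¹ rfl k x⁻¹ hxyi
  have E : ∀ u : W, u⁻¹ * s k = (s k * u)⁻¹ := fun u => by rw [mul_inv_rev, cs.inv_simple]
  simp only [E, cs.length_inv] at key
  constructor
  · intro h1
    constructor
    · intro h2
      have h3 := bLE_inv cs ((key.1 h1).1 h2)
      simpa using h3
    · intro h2
      obtain ⟨ha, hb⟩ := (key.1 h1).2 h2
      exact ⟨by simpa using bLE_inv cs ha, by simpa using bLE_inv cs hb⟩
  · intro h1 h2
    have h3 := bLE_inv cs (key.2 h1 h2)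
    simpa using h3

theorem bLE_desc_left {x : W} {k : B} (h : ℓ (s k * x) < ℓ x) : bruhatLE cs (s k * x) x := by
  have h2 := bLE_of_edge_left cs (cs.isReflection_simple k) (u := s k * x)
    (by rw [cs.simple_mul_simple_cancel_left]; exact h)
  rwa [cs.simple_mul_simple_cancel_left] at h2

theorem mem_parabolic_iff {I : Set B} {w : W} :
    w ∈ parabolic cs I ↔ ∃ ω : List B, (∀ i ∈ ω, i ∈ I) ∧ w = π ω := by
  constructor
  · intro h
    induction h using Subgroup.closure_induction with
    | mem x hx =>
        obtain ⟨i, hi, rfl⟩ := hx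
        exact ⟨[i], by simpa using hi, (cs.wordProd_singleton i).symm⟩
    | one => exact ⟨[], by simp, by simp⟩
    | mul x y hx hy ihx ihy =>
        obtain ⟨ω1, h1, rfl⟩ := ihx
        obtain ⟨ω2, h2, rfl⟩ := ihy
        refine ⟨ω1 ++ ω2, ?_, (cs.wordProd_append ω1 ω2).symm⟩
        intro i hi
        rcases List.mem_append.mp hi with h | h
        · exact h1 i h
        · exact h2 i h
    | inv x hx ihx =>
        obtain ⟨ω, h1, rfl⟩ := ihx
        exact ⟨ω.reverse, fun i hi => h1 i (List.mem_reverse.mp hi),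
          by rw [cs.wordProd_reverse]⟩
  · rintro ⟨ω, hsub, rfl⟩
    induction ω with
    | nil => simpa using (parabolic cs I).one_mem
    | cons i ω ih =>
        rw [wordProd_cons]
        refine mul_mem ?_ (ih (fun j hj => hsub j (List.mem_cons_of_mem i hj)))
        exact Subgroup.subset_closure ⟨i, hsub i List.mem_cons_self, rfl⟩

theorem simple_mem_parabolic {I : Set B} {i : B} (hi : i ∈ I) : s i ∈ parabolic cs I :=
  Subgroup.subset_closure ⟨i, hi, rfl⟩

theorem exists_reduced_word_parabolic {I : Set B} {w : W} (h : w ∈ parabolic cs I) :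
    ∃ ω, (∀ i ∈ ω, i ∈ I) ∧ cs.IsReduced ω ∧ w = π ω := by
  obtain ⟨ω, hI, rfl⟩ := (mem_parabolic_iff cs).mp h
  obtain ⟨ω', hsub, hred, hprod⟩ := deletion cs ω
  exact ⟨ω', fun i hi => hI i (hsub.subset hi), hred, hprod.symm⟩

theorem parabolic_descent {I : Set B} {w : W} (h : w ∈ parabolic cs I) (hne : w ≠ 1) :
    ∃ i ∈ I, ℓ (s i * w) < ℓ w ∧ s i * w ∈ parabolic cs I := by
  obtain ⟨ω, hI, hred, rfl⟩ := exists_reduced_word_parabolic cs h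
  cases ω with
  | nil => exact absurd (by simp) hne
  | cons i ω' =>
      have hcan : s i * π (i :: ω') = π ω' := by
        rw [wordProd_cons, cs.simple_mul_simple_cancel_left]
      refine ⟨i, hI i List.mem_cons_self, ?_, ?_⟩
      · rw [hcan]
        calc ℓ (π ω') ≤ ω'.length := cs.length_wordProd_le ω'
          _ < (i :: ω').length := by simp
          _ = ℓ (π (i :: ω')) := hred.symm
      · rw [hcan]
        exact (mem_parabolic_iff cs).mpr ⟨ω', fun j hj => hI j (List.mem_cons_of_mem i hj), rfl⟩

theorem min_rep_additive {I : Set B} {ς : W} (hς : IsMinCosetRep cs I ς) :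
    ∀ (n : ℕ) (v : W), v ∈ parabolic cs I → ℓ v = n → ℓ (v * ς) = ℓ v + ℓ ς := by
  intro n
  induction n using Nat.strong_induction_on with
  | _ n IH =>
    intro v hvP hvn
    by_cases hv1 : v = 1
    · subst hv1; simp
    obtain ⟨i, hiI, hdesc, hswP⟩ := parabolic_descent cs hvP hv1
    have hplus : ℓ (s i * v) + 1 = ℓ v := by
      rcases cs.length_simple_mul v i with h | h
      · omega
      · exact h
    set v' := s i * v with hv'
    have hvv : v = s i * v' := by rw [hv', cs.simple_mul_simple_cancel_left]
    have hIH : ℓ (v' * ς) = ℓ v' + ℓ ς := IH (ℓ v') (by omega) v' hswP rfl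
    have hvς : v * ς = s i * (v' * ς) := by rw [hvv, mul_assoc]
    rcases cs.length_simple_mul (v' * ς) i with h | h
    · rw [hvς, h, hIH]; omega
    · exfalso
      -- exchange leads to contradiction
      have hlt : ℓ (s i * (v' * ς)) < ℓ (v' * ς) := by omega
      obtain ⟨ρ₁, hρ₁I, hρ₁red, hρ₁⟩ := exists_reduced_word_parabolic cs hswP
      obtain ⟨ρ₂, hρ₂red, hρ₂⟩ := cs.exists_reduced_word' ς
      have hcatprod : v' * ς = π (ρ₁ ++ ρ₂) := by rw [wordProd_append, ← hρ₁, ← hρ₂]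
      have hcatred : cs.IsReduced (ρ₁ ++ ρ₂) := by
        unfold CoxeterSystem.IsReduced
        rw [← hcatprod, List.length_append, hIH, ← hρ₁red, ← hρ₂red, ← hρ₁, ← hρ₂]
      obtain ⟨l, hsub, hlen, hprod⟩ :=
        strong_exchange_left cs (cs.isReflection_simple i) hlt hcatred hcatprod
      obtain ⟨l₁, l₂, rfl, h1, h2⟩ := List.sublist_append_iff.mp hsub
      simp only [List.length_append] at hlen
      have hl1 := h1.length_le
      have hl2 := h2.length_le
      by_cases hfull : l₁.length = ρ₁.length
      · have hl₁eq : l₁ = ρ₁ := h1.eq_of_length hfull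
        subst hl₁eq
        have hπl₂ : (v'⁻¹ * s i * v') * ς = π l₂ := by
          have h5 : s i * (v' * ς) = v' * π l₂ := by
            rw [hprod, wordProd_append, ← hρ₁]
          calc (v'⁻¹ * s i * v') * ς = v'⁻¹ * (s i * (v' * ς)) := by group
            _ = v'⁻¹ * (v' * π l₂) := by rw [h5]
            _ = π l₂ := by group
        have huP : v'⁻¹ * s i * v' ∈ parabolic cs I :=
          mul_mem (mul_mem (inv_mem hswP) (simple_mem_parabolic cs hiI)) hswP
        have hmin := hς _ huP
        have hl₂len : ℓ (π l₂) ≤ l₂.length := cs.length_wordProd_le l₂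
        rw [← hπl₂] at hl₂len
        have : ρ₂.length = ℓ ς := by rw [← hρ₂red, ← hρ₂]
        omega
      · have hl₂full : l₂.length = ρ₂.length := by omega
        have hl₂eq : l₂ = ρ₂ := h2.eq_of_length hl₂full
        subst hl₂eq
        have hvπ : v * ς = π l₁ * ς := by
          rw [← hvς] at hprod
          rw [hprod, wordProd_append, ← hρ₂]
        have hv_eq : v = π l₁ := mul_right_cancel hvπ
        have : ℓ v ≤ l₁.length := hv_eq ▸ cs.length_wordProd_le l₁
        have : ρ₁.length = ℓ v' := by rw [← hρ₁red, ← hρ₁]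
        omega

theorem main_exists {I : Set B} {ς : W} (hς : IsMinCosetRep cs I ς) :
    ∀ (n : ℕ) (w : W), w ∈ parabolic cs I → ℓ w = n → ∀ u, bruhatLE cs u (w * ς) →
      bruhatLE cs ς u → ∃ v, v ∈ parabolic cs I ∧ bruhatLE cs v w ∧ u = v * ς := by
  intro n
  induction n using Nat.strong_induction_on with
  | _ n IH =>
    intro w hwP hwn u hu hςu
    by_cases hw1 : w = 1
    · subst hw1
      rw [one_mul] at hu
      have hul : ℓ u ≤ ℓ ς := bLE_length_le cs hu
      have hςeq : ς = u := bLE_eq_of_length_ge cs hςu hul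
      exact ⟨1, (parabolic cs I).one_mem, Relation.ReflTransGen.refl,
        by rw [one_mul, ← hςeq]⟩
    obtain ⟨i, hiI, hdesc, hswP⟩ := parabolic_descent cs hwP hw1
    have hadd_w : ℓ (w * ς) = ℓ w + ℓ ς := min_rep_additive cs hς (ℓ w) w hwP rfl
    have hadd_sw : ℓ ((s i * w) * ς) = ℓ (s i * w) + ℓ ς :=
      min_rep_additive cs hς (ℓ (s i * w)) (s i * w) hswP rfl
    have hswς : ℓ (s i * (w * ς)) < ℓ (w * ς) := by
      rw [← mul_assoc, hadd_sw, hadd_w]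
      omega
    have hςs : ℓ ς < ℓ (s i * ς) := by
      have h1 := hς (s i) (simple_mem_parabolic cs hiI)
      have h2 := cs.length_simple_mul_ne ς i
      omega
    by_cases hsu : ℓ (s i * u) < ℓ u
    · have h1 : bruhatLE cs (s i * u) ((s i * w) * ς) := by
        have h := ((lifting_left cs i (w * ς) u hu).1 hswς).1 hsu
        rwa [← mul_assoc] at h
      have h2 : bruhatLE cs ς (s i * u) :=
        (((lifting_left cs i u ς hςu).1 hsu).2 hςs).1
      obtain ⟨v', hv'P, hv'le, hv'eq⟩ :=
        IH (ℓ (s i * w)) (by omega) (s i * w) hswP rfl (s i * u) h1 h2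
      have hswle : bruhatLE cs (s i * w) w := bLE_desc_left cs hdesc
      refine ⟨s i * v', mul_mem (simple_mem_parabolic cs hiI) hv'P, ?_, ?_⟩
      · by_cases hc : ℓ (s i * v') < ℓ v'
        · exact bLE_trans cs (bLE_desc_left cs hc) (bLE_trans cs hv'le hswle)
        · have hc' : ℓ v' < ℓ (s i * v') := by
            have := cs.length_simple_mul_ne v' i; omega
          have hww : ℓ (s i * w) < ℓ (s i * (s i * w)) := by
            rw [cs.simple_mul_simple_cancel_left]; exact hdesc
          have h := (lifting_left cs i (s i * w) v' hv'le).2 hww hc'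
          rwa [cs.simple_mul_simple_cancel_left] at h
      · have hucan : u = s i * (s i * u) := (cs.simple_mul_simple_cancel_left (w := u) i).symm
        rw [hucan, hv'eq, ← mul_assoc]
    · have hsu' : ℓ u < ℓ (s i * u) := by
        have := cs.length_simple_mul_ne u i; omega
      have h1 : bruhatLE cs u ((s i * w) * ς) := by
        have h := (((lifting_left cs i (w * ς) u hu).1 hswς).2 hsu').1
        rwa [← mul_assoc] at h
      obtain ⟨v, hvP, hvle, hveq⟩ :=
        IH (ℓ (s i * w)) (by omega) (s i * w) hswP rfl u h1 hςu
      exact ⟨v, hvP, bLE_trans cs hvle (bLE_desc_left cs hdesc), hveq⟩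

end BruhatAux

/-- If ς is a minimal length right coset representative of W_I, u ≤ wς with w ∈ W_I,
and ς ≤ u, then there is a unique v ∈ W_I with v ≤ w and u = vς. -/
theorem existsUnique_of_le_mul_minCosetRep (cs : CoxeterSystem M W) (I : Set B) (ς : W)
    (hς : IsMinCosetRep cs I ς) (u w : W) (hw : w ∈ parabolic cs I)
    (hu : bruhatLE cs u (w * ς)) (hςu : bruhatLE cs ς u) :
    ∃! v, v ∈ parabolic cs I ∧ bruhatLE cs v w ∧ u = v * ς := by
  classical
  obtain ⟨v, hvP, hvle, hveq⟩ :=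
    BruhatAux.main_exists cs hς (cs.length w) w hw rfl u hu hςu
  refine ⟨v, ⟨hvP, hvle, hveq⟩, ?_⟩
  rintro y ⟨-, -, hy⟩
  exact mul_right_cancel (hy.symm.trans hveq)
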